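/- Let f : ℝ → ℝ be a concave function such that f(0) = 0, f is differentiable at 0 with f'(0) ≠ 0, and there exists x* > 0 with f(x*) > 0. Let a, b be real numbers with a > b > 0. Then there exists δ > 0 such that for every ∇ ∈ (0, δ), a·f(∇) + b·f(−∇) > 0. -/

import Mathlib

/-- Lemma A.4: for a concave `f` with `f 0 = 0`, differentiable at `0` with nonzero derivative,
and positive somewhere on the positive axis, and for `a > b > 0`, there is `δ > 0` such that
`a * f ∇ + b * f (-∇) > 0` for all `∇ ∈ (0, δ)`. -/
theorem exists_delta_pos_combination
    (f : ℝ → ℝ)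
    (hf : ∀ x y α : ℝ, 0 ≤ α → α ≤ 1 →
      α * f x + (1 - α) * f y ≤ f (α * x + (1 - α) * y))
    (hf0 : f 0 = 0)
    (hdiff : DifferentiableAt ℝ f 0)
    (hderiv : deriv f 0 ≠ 0)
    (hpos : ∃ xs : ℝ, 0 < xs ∧ 0 < f xs)
    (a b : ℝ) (hab : b < a) (hb : 0 < b) :
    ∃ δ > 0, ∀ grad : ℝ, grad ∈ Set.Ioo (0 : ℝ) δ → 0 < a * f grad + b * f (-grad) := by
  set L := deriv f 0 with hL
  have hfd : HasDerivAt f L 0 := hdiff.hasDerivAt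
  obtain ⟨xs, hxs, hfxs⟩ := hpos
  -- slope bound: for 0 < t ≤ xs, f t / t ≥ f xs / xs
  have hslope : ∀ t : ℝ, 0 < t → t ≤ xs → f xs / xs ≤ f t / t := by
    intro t ht htx
    have hα0 : 0 ≤ t / xs := div_nonneg ht.le hxs.le
    have hα1 : t / xs ≤ 1 := div_le_one_of_le₀ htx hxs.le
    have := hf xs 0 (t / xs) hα0 hα1
    simp only [hf0, mul_zero, add_zero] at this
    have ht' : t / xs * xs = t := div_mul_cancel₀ t (ne_of_gt hxs)
    rw [ht'] at this
    -- this : t / xs * f xs ≤ f t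
    rw [div_le_div_iff₀ hxs ht]
    calc f xs * t = (t / xs * f xs) * xs := by field_simp
    _ ≤ f t * xs := by
        apply mul_le_mul_of_nonneg_right this hxs.le
  -- L = lim of f t / t over 𝓝[>]0, hence L ≥ f xs / xs > 0
  have htend : Filter.Tendsto (slope f 0) (nhdsWithin 0 {(0:ℝ)}ᶜ) (nhds L) :=
    hasDerivAt_iff_tendsto_slope.mp hfd
  have htend' : Filter.Tendsto (slope f 0) (nhdsWithin 0 (Set.Ioi 0)) (nhds L) := by
    refine htend.mono_left (nhdsWithin_mono _ ?_)
    intro x hx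
    exact ne_of_gt hx
  have hLpos : 0 < L := by
    have hge : L ≥ f xs / xs := by
      refine ge_of_tendsto htend' ?_
      filter_upwards [Ioo_mem_nhdsGT_of_mem (by constructor <;> [rfl; exact hxs] :
        (0:ℝ) ∈ Set.Ico 0 xs)] with t ht
      have : f xs / xs ≤ f t / t := hslope t ht.1 ht.2.le
      simpa [slope_def_field, hf0] using this
    exact lt_of_lt_of_le (div_pos hfxs hxs) hge
  -- g has derivative (a - b) * L at 0
  set g : ℝ → ℝ := fun t => a * f t + b * f (-t) with hg
  have hgneg : HasDerivAt (fun t : ℝ => f (-t)) (-L) 0 := by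
    have h0 : HasDerivAt f L (-(0 : ℝ)) := by simpa using hfd
    have := h0.comp (0 : ℝ) (hasDerivAt_neg (0 : ℝ))
    simpa [Function.comp_def] using this
  have hgd : HasDerivAt g ((a - b) * L) 0 := by
    have := (hfd.const_mul a).add (hgneg.const_mul b)
    rw [show (a - b) * L = a * L + b * -L by ring]
    exact this
  have hg0 : g 0 = 0 := by simp [hg, hf0]
  have hDpos : 0 < (a - b) * L := mul_pos (sub_pos.mpr hab) hLpos
  have hgt : Filter.Tendsto (slope g 0) (nhdsWithin 0 (Set.Ioi 0)) (nhds ((a - b) * L)) := by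
    refine (hasDerivAt_iff_tendsto_slope.mp hgd).mono_left (nhdsWithin_mono _ ?_)
    intro x hx; exact ne_of_gt hx
  have hev : ∀ᶠ t in nhdsWithin 0 (Set.Ioi 0), 0 < slope g 0 t :=
    hgt.eventually (eventually_gt_nhds hDpos)
  rw [eventually_nhdsWithin_iff, Metric.eventually_nhds_iff] at hev
  obtain ⟨δ, hδ, hball⟩ := hev
  refine ⟨δ, hδ, fun t ht => ?_⟩
  have h1 : dist t 0 < δ := by
    rw [Real.dist_eq, sub_zero, abs_of_pos ht.1]; exact ht.2
  have h2 := hball h1 ht.1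
  rw [slope_def_field, hg0] at h2
  have ht0 : (0:ℝ) < t - 0 := by simpa using ht.1
  have h3 : 0 < g t - 0 := by
    calc (0:ℝ) < (g t - 0) / (t - 0) * (t - 0) := mul_pos h2 ht0
    _ = g t - 0 := div_mul_cancel₀ _ (ne_of_gt ht0)
  simpa [hg] using h3
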